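/- Let b be a holomorphic map of the open unit disk 𝔻 ⊂ ℂ into itself and let α ≥ 1 be an integer. Then the kernel (z,w) ↦ ((1 − b(z)·conj(b(w)))/(1 − z·conj(w)))^α is positive semidefinite on 𝔻. -/

import Mathlib

open Complex Metric ComplexConjugate
open scoped ComplexOrder

noncomputable section

/-- A kernel `K : X → X → ℂ` is positive semidefinite on a set `S`: for all finite
families of points of `S` and scalars, the associated quadratic form is a
nonnegative real number (using the partial order on `ℂ`). -/
def IsPSDKernelOn {X : Type*} (K : X → X → ℂ) (S : Set X) : Prop :=
  ∀ (n : ℕ) (x : Fin n → X), (∀ i, x i ∈ S) → ∀ c : Fin n → ℂ,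
    0 ≤ ∑ i, ∑ j, c i * conj (c j) * K (x i) (x j)

section DBRAux
open intervalIntegral
open scoped Real

lemma cauchy_key {ψ : ℂ → ℂ} (hψ : DifferentiableOn ℂ ψ (ball (0:ℂ) 1))
    {r : ℝ} (hr0 : 0 < r) (hr1 : r < 1) {w : ℂ} (hw : ‖w‖ < 1) :
    ∫ θ in (0:ℝ)..(2*π), (1 - w * conj (circleMap 0 r θ))⁻¹ * ψ (circleMap 0 r θ)
      = 2 * π * ψ ((r:ℂ)^2 * w) := by
  have hdc : DiffContOnCl ℂ ψ (ball (0:ℂ) r) := by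
    refine DifferentiableOn.diffContOnCl (hψ.mono ?_)
    rw [closure_ball (0:ℂ) hr0.ne']
    exact fun ζ hζ => by
      simp only [mem_closedBall, mem_ball, dist_zero_right] at *
      exact lt_of_le_of_lt hζ hr1
  have hw' : (r:ℂ)^2 * w ∈ ball (0:ℂ) r := by
    simp only [mem_ball, dist_zero_right, norm_mul, norm_pow, Complex.norm_real,
      Real.norm_eq_abs, abs_of_pos hr0]
    calc r^2 * ‖w‖ ≤ r^2 * 1 := by nlinarith [norm_nonneg w]
      _ < r := by nlinarith
  have hC := hdc.circleIntegral_sub_inv_smul hw'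
  rw [circleIntegral] at hC
  simp only [deriv_circleMap, smul_eq_mul] at hC
  have hrw : ∀ θ : ℝ, circleMap 0 r θ * I * ((circleMap 0 r θ - (r:ℂ)^2*w)⁻¹ * ψ (circleMap 0 r θ))
      = I * ((1 - w * conj (circleMap 0 r θ))⁻¹ * ψ (circleMap 0 r θ)) := by
    intro θ
    set ζ := circleMap 0 r θ with hζdef
    have hζ0 : ζ ≠ 0 := by
      simp [hζdef, circleMap_eq_center_iff.ne, hr0.ne']
    have hnormζ : ζ * conj ζ = (r:ℂ)^2 := by
      rw [mul_comm, Complex.conj_mul']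
      norm_cast
      rw [hζdef, norm_circleMap_zero, abs_of_pos hr0]
    have hd : (1 : ℂ) - w * conj ζ ≠ 0 := by
      have hn : ‖w * conj ζ‖ < 1 := by
        rw [norm_mul, RingHomIsometric.norm_map]
        have hz : ‖ζ‖ = r := by
          rw [hζdef, norm_circleMap_zero, abs_of_pos hr0]
        rw [hz]
        nlinarith [norm_nonneg w]
      intro h
      have h1 : w * conj ζ = 1 := by linear_combination -h
      rw [h1, norm_one] at hn
      exact lt_irrefl _ hn
    have hkey : ζ - (r:ℂ)^2 * w = (1 - w * conj ζ) * ζ := by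
      rw [sub_mul, one_mul, mul_comm w (conj ζ), mul_assoc, ← hnormζ]; ring
    rw [hkey, mul_inv]
    field_simp
  simp only [hrw] at hC
  rw [intervalIntegral.integral_const_mul] at hC
  rw [show (2:ℂ) * ↑π * I * ψ ((r:ℂ)^2 * w) = I * (2 * ↑π * ψ ((r:ℂ)^2 * w)) by ring] at hC
  exact mul_left_cancel₀ I_ne_zero hC

lemma int_re {F : ℝ → ℂ} {a b : ℝ} (hF : IntervalIntegrable F MeasureTheory.volume a b) :
    (∫ θ in a..b, F θ).re = ∫ θ in a..b, (F θ).re := by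
  simp only [intervalIntegral, Complex.sub_re]
  rw [← RCLike.re_to_complex (x := ∫ x in Set.Ioc a b, F x), ← RCLike.re_to_complex (x := ∫ x in Set.Ioc b a, F x)]
  rw [← integral_re hF.1, ← integral_re hF.2]
  simp [RCLike.re_to_complex]


lemma one_sub_ne {u : ℂ} (h : ‖u‖ < 1) : (1:ℂ) - u ≠ 0 := by
  intro h0
  have : u = 1 := by linear_combination -h0
  rw [this, norm_one] at h
  exact lt_irrefl _ h

lemma norm_circleMap {r : ℝ} (hr0 : 0 < r) (θ : ℝ) : ‖circleMap 0 r θ‖ = r := by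
  rw [norm_circleMap_zero, abs_of_pos hr0]

/-- the conjugate-kernel combination -/
def hker {n : ℕ} (z d : Fin n → ℂ) : ℂ → ℂ :=
  fun ζ => ∑ i, conj (d i) * (1 - ζ * conj (z i))⁻¹

lemma hker_diff {n : ℕ} {z : Fin n → ℂ} (hz : ∀ i, ‖z i‖ < 1) (d : Fin n → ℂ) :
    DifferentiableOn ℂ (hker z d) (ball (0:ℂ) 1) := by
  apply DifferentiableOn.fun_sum
  intro i _
  apply DifferentiableOn.const_mul
  apply DifferentiableOn.inv
  · exact (differentiableOn_const 1).sub ((differentiableOn_id).mul (differentiableOn_const _))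
  · intro ζ hζ
    rw [mem_ball, dist_zero_right] at hζ
    apply one_sub_ne
    rw [norm_mul, RingHomIsometric.norm_map]
    nlinarith [norm_nonneg ζ, norm_nonneg (z i), hz i]

lemma cont_comp {r : ℝ} (hr0 : 0 < r) (hr1 : r < 1) {ψ : ℂ → ℂ}
    (hψ : DifferentiableOn ℂ ψ (ball (0:ℂ) 1)) :
    Continuous (fun θ : ℝ => ψ (circleMap 0 r θ)) := by
  apply ContinuousOn.comp_continuous hψ.continuousOn (continuous_circleMap 0 r)
  intro θ
  rw [mem_ball, dist_zero_right, norm_circleMap hr0]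
  exact hr1

lemma cont_inv_fac {r : ℝ} (hr0 : 0 < r) (hr1 : r < 1) {w : ℂ} (hw : ‖w‖ < 1) :
    Continuous (fun θ : ℝ => (1 - w * conj (circleMap 0 r θ))⁻¹) := by
  apply Continuous.inv₀
  · exact (continuous_const.sub (continuous_const.mul
      (Complex.continuous_conj.comp (continuous_circleMap 0 r))))
  · intro θ
    apply one_sub_ne
    rw [norm_mul, RingHomIsometric.norm_map, norm_circleMap hr0]
    nlinarith [norm_nonneg w]

lemma key_int {n : ℕ} {z : Fin n → ℂ} (hz : ∀ i, ‖z i‖ < 1) (d : Fin n → ℂ)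
    {ψ : ℂ → ℂ} (hψ : DifferentiableOn ℂ ψ (ball (0:ℂ) 1)) {r : ℝ}
    (hr0 : 0 < r) (hr1 : r < 1) :
    ∫ θ in (0:ℝ)..(2*π), ψ (circleMap 0 r θ) * conj (hker z d (circleMap 0 r θ))
      = 2 * π * ∑ i, d i * ψ ((r:ℂ)^2 * z i) := by
  have hpt : ∀ θ : ℝ, ψ (circleMap 0 r θ) * conj (hker z d (circleMap 0 r θ))
      = ∑ i, d i * ((1 - z i * conj (circleMap 0 r θ))⁻¹ * ψ (circleMap 0 r θ)) := by
    intro θ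
    rw [hker, map_sum, Finset.mul_sum]
    refine Finset.sum_congr rfl fun i _ => ?_
    rw [map_mul, Complex.conj_conj, map_inv₀, map_sub, map_one, map_mul, Complex.conj_conj]
    ring
  simp only [hpt]
  rw [intervalIntegral.integral_finset_sum]
  · rw [Finset.mul_sum]
    refine Finset.sum_congr rfl fun i _ => ?_
    rw [intervalIntegral.integral_const_mul, cauchy_key hψ hr0 hr1 (hz i)]
    ring
  · intro i _
    exact (continuous_const.mul ((cont_inv_fac hr0 hr1 (hz i)).mul
      (cont_comp hr0 hr1 hψ))).intervalIntegrable _ _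

lemma base_psd (b : ℂ → ℂ)
    (hb_holo : DifferentiableOn ℂ b (ball (0 : ℂ) 1))
    (hb_maps : ∀ ζ ∈ ball (0 : ℂ) 1, b ζ ∈ ball (0 : ℂ) 1)
    {n : ℕ} {z : Fin n → ℂ} (hz : ∀ i, ‖z i‖ < 1) (c : Fin n → ℂ) :
    0 ≤ ∑ i, ∑ j, c i * conj (c j) *
      ((1 - b (z i) * conj (b (z j))) / (1 - z i * conj (z j))) := by
  classical
  set d2 : Fin n → ℂ := fun i => c i * b (z i) with hd2
  have hbz : ∀ i, ‖b (z i)‖ < 1 := fun i =>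
    mem_ball_zero_iff.mp (hb_maps _ (mem_ball_zero_iff.mpr (hz i)))
  have hzz : ∀ i j, ‖z i * conj (z j)‖ < 1 := by
    intro i j
    rw [norm_mul, RingHomIsometric.norm_map]
    nlinarith [norm_nonneg (z i), norm_nonneg (z j), hz i, hz j]
  -- the three families of sums
  set Sfun : ℝ → ℂ := fun r => ∑ i, ∑ j, c i * conj (c j) *
      (1 - (r:ℂ)^2 * (z i * conj (z j)))⁻¹ with hSfun
  set Tfun : ℝ → ℂ := fun r => ∑ i, ∑ j, d2 i * conj (d2 j) *
      (1 - (r:ℂ)^2 * (z i * conj (z j)))⁻¹ with hTfun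
  set Pfun : ℝ → ℂ := fun r => ∑ i, c i *
      (b ((r:ℂ)^2 * z i) * hker z d2 ((r:ℂ)^2 * z i)) with hPfun
  -- rewriting of the sums from key_int
  have hsum_eq : ∀ (d : Fin n → ℂ) (r : ℝ),
      2 * (π:ℂ) * ∑ i, d i * hker z d ((r:ℂ)^2 * z i)
        = 2 * π * ∑ i, ∑ j, d i * conj (d j) * (1 - (r:ℂ)^2 * (z i * conj (z j)))⁻¹ := by
    intro d r
    congr 1
    refine Finset.sum_congr rfl fun i _ => ?_
    rw [hker, Finset.mul_sum]
    refine Finset.sum_congr rfl fun j _ => ?_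
    rw [show (r:ℂ)^2 * z i * conj (z j) = (r:ℂ)^2 * (z i * conj (z j)) by ring]
    ring
  -- facts for each r in (0,1)
  have hmain : ∀ r : ℝ, r ∈ Set.Ioo (0:ℝ) 1 →
      (Sfun r).im = 0 ∧ 0 ≤ (Sfun r).re ∧ (Tfun r).im = 0 ∧ 0 ≤ (Tfun r).re ∧
      2 * (Pfun r).re ≤ (Tfun r).re + (Sfun r).re := by
    rintro r ⟨hr0, hr1⟩
    set ζ : ℝ → ℂ := circleMap 0 r with hζ
    have hcont1 : Continuous fun θ => hker z c (ζ θ) := cont_comp hr0 hr1 (hker_diff hz c)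
    have hcont2 : Continuous fun θ => hker z d2 (ζ θ) := cont_comp hr0 hr1 (hker_diff hz d2)
    have hcontb : Continuous fun θ => b (ζ θ) := cont_comp hr0 hr1 hb_holo
    -- S identity
    have hSid : 2 * (π:ℂ) * Sfun r = ((∫ θ in (0:ℝ)..(2*π), normSq (hker z c (ζ θ))):ℝ) := by
      rw [← intervalIntegral.integral_ofReal (μ := MeasureTheory.volume)]
      rw [hSfun, ← hsum_eq c r, ← key_int hz c (hker_diff hz c) hr0 hr1]
      refine intervalIntegral.integral_congr fun θ _ => ?_
      rw [Complex.mul_conj]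
    have hTid : 2 * (π:ℂ) * Tfun r = ((∫ θ in (0:ℝ)..(2*π), normSq (hker z d2 (ζ θ))):ℝ) := by
      rw [← intervalIntegral.integral_ofReal (μ := MeasureTheory.volume)]
      rw [hTfun, ← hsum_eq d2 r, ← key_int hz d2 (hker_diff hz d2) hr0 hr1]
      refine intervalIntegral.integral_congr fun θ _ => ?_
      rw [Complex.mul_conj]
    have hPid : 2 * (π:ℂ) * Pfun r
        = ∫ θ in (0:ℝ)..(2*π), (b (ζ θ) * hker z d2 (ζ θ)) * conj (hker z c (ζ θ)) := by
      exact (key_int hz c (hb_holo.mul (hker_diff hz d2)) hr0 hr1).symm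
    -- nonnegativity of S and T parts
    have hSnn : 0 ≤ ∫ θ in (0:ℝ)..(2*π), normSq (hker z c (ζ θ)) :=
      intervalIntegral.integral_nonneg (by positivity) fun θ _ => normSq_nonneg _
    have hTnn : 0 ≤ ∫ θ in (0:ℝ)..(2*π), normSq (hker z d2 (ζ θ)) :=
      intervalIntegral.integral_nonneg (by positivity) fun θ _ => normSq_nonneg _
    have hπ : (0:ℝ) < 2 * π := by positivity
    have hSr : Sfun r = (((∫ θ in (0:ℝ)..(2*π), normSq (hker z c (ζ θ))) / (2*π) : ℝ) : ℂ) := by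
      have h2π : ((2*π:ℝ):ℂ) ≠ 0 := by exact_mod_cast hπ.ne'
      field_simp
      rw [Complex.ofReal_div, ← hSid]; push_cast; field_simp
    have hTr : Tfun r = (((∫ θ in (0:ℝ)..(2*π), normSq (hker z d2 (ζ θ))) / (2*π) : ℝ) : ℂ) := by
      have h2π : ((2*π:ℝ):ℂ) ≠ 0 := by exact_mod_cast hπ.ne'
      field_simp
      rw [Complex.ofReal_div, ← hTid]; push_cast; field_simp
    refine ⟨by rw [hSr, Complex.ofReal_im], by rw [hSr, Complex.ofReal_re]; positivity,
      by rw [hTr, Complex.ofReal_im], by rw [hTr, Complex.ofReal_re]; positivity, ?_⟩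
    -- the contraction inequality
    -- integrability facts
    have hiBG : IntervalIntegrable (fun θ => (b (ζ θ) * hker z d2 (ζ θ)) * conj (hker z c (ζ θ)))
        MeasureTheory.volume 0 (2*π) :=
      ((hcontb.mul hcont2).mul (Complex.continuous_conj.comp hcont1)).intervalIntegrable _ _
    have hq : 0 ≤ ∫ θ in (0:ℝ)..(2*π), normSq (b (ζ θ) * hker z d2 (ζ θ) - hker z c (ζ θ)) :=
      intervalIntegral.integral_nonneg (by positivity) fun θ _ => normSq_nonneg _
    have hexp : (∫ θ in (0:ℝ)..(2*π), normSq (b (ζ θ) * hker z d2 (ζ θ) - hker z c (ζ θ)))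
        = (∫ θ in (0:ℝ)..(2*π), normSq (b (ζ θ) * hker z d2 (ζ θ)))
          + (∫ θ in (0:ℝ)..(2*π), normSq (hker z c (ζ θ)))
          - 2 * (2 * π * Pfun r).re := by
      have h1 : Continuous fun θ => normSq (b (ζ θ) * hker z d2 (ζ θ)) :=
        Complex.continuous_normSq.comp (hcontb.mul hcont2)
      have h2 : Continuous fun θ => normSq (hker z c (ζ θ)) :=
        Complex.continuous_normSq.comp hcont1
      have h3 : Continuous fun θ =>
          ((b (ζ θ) * hker z d2 (ζ θ)) * conj (hker z c (ζ θ))).re :=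
        Complex.continuous_re.comp ((hcontb.mul hcont2).mul
          (Complex.continuous_conj.comp hcont1))
      rw [hPid, int_re hiBG]
      simp only [normSq_sub]
      rw [intervalIntegral.integral_sub ((h1.intervalIntegrable _ _).add (h2.intervalIntegrable _ _))
        ((h3.intervalIntegrable _ _).const_mul 2),
        intervalIntegral.integral_add (h1.intervalIntegrable _ _) (h2.intervalIntegrable _ _),
        intervalIntegral.integral_const_mul]
    have hre : (2 * (π:ℂ) * Pfun r).re = 2 * π * (Pfun r).re := by
      rw [show (2 * (π:ℂ)) = ((2*π:ℝ):ℂ) by push_cast; ring, Complex.re_ofReal_mul]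
    have hub : (∫ θ in (0:ℝ)..(2*π), normSq (b (ζ θ) * hker z d2 (ζ θ)))
        ≤ ∫ θ in (0:ℝ)..(2*π), normSq (hker z d2 (ζ θ)) := by
      refine intervalIntegral.integral_mono_on hπ.le
        ((Complex.continuous_normSq.comp (hcontb.mul hcont2)).intervalIntegrable _ _)
        ((Complex.continuous_normSq.comp hcont2).intervalIntegrable _ _) fun θ _ => ?_
      have hbθ : ‖b (ζ θ)‖ < 1 :=
        mem_ball_zero_iff.mp (hb_maps _ (mem_ball_zero_iff.mpr (by rw [hζ, norm_circleMap hr0]; exact hr1)))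
      rw [normSq_mul]
      have h1' : normSq (b (ζ θ)) ≤ 1 := by
        rw [Complex.normSq_eq_norm_sq]
        nlinarith [norm_nonneg (b (ζ θ))]
      nlinarith [normSq_nonneg (hker z d2 (ζ θ)), normSq_nonneg (b (ζ θ))]
    rw [hTr, hSr, Complex.ofReal_re, Complex.ofReal_re, ← add_div, le_div_iff₀ hπ]
    nlinarith [hq, hexp, hub, hre, Real.pi_pos]
  -- limits as r → 1⁻
  set S : ℂ := ∑ i, ∑ j, c i * conj (c j) * (1 - (z i * conj (z j)))⁻¹ with hS
  set T : ℂ := ∑ i, ∑ j, d2 i * conj (d2 j) * (1 - (z i * conj (z j)))⁻¹ with hT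
  set l : Filter ℝ := nhdsWithin 1 (Set.Iio 1) with hl
  have hr2 : Filter.Tendsto (fun r : ℝ => ((r:ℂ)^2)) l (nhds 1) := by
    have h0 : Filter.Tendsto (fun r : ℝ => (r:ℂ)) l (nhds ((1:ℝ):ℂ)) :=
      (Complex.continuous_ofReal.tendsto 1).mono_left nhdsWithin_le_nhds
    simpa using h0.pow 2
  have hinvlim : ∀ i j : Fin n, Filter.Tendsto
      (fun r : ℝ => (1 - (r:ℂ)^2 * (z i * conj (z j)))⁻¹) l
      (nhds ((1 - z i * conj (z j))⁻¹)) := by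
    intro i j
    have h' : Filter.Tendsto (fun r : ℝ => 1 - (r:ℂ)^2 * (z i * conj (z j))) l
        (nhds (1 - 1 * (z i * conj (z j)))) :=
      tendsto_const_nhds.sub (hr2.mul_const _)
    rw [one_mul] at h'
    exact h'.inv₀ (one_sub_ne (hzz i j))
  have hSlim : Filter.Tendsto Sfun l (nhds S) := by
    rw [hSfun, hS]
    refine tendsto_finset_sum _ fun i _ => tendsto_finset_sum _ fun j _ => ?_
    exact (hinvlim i j).const_mul _
  have hTlim : Filter.Tendsto Tfun l (nhds T) := by
    rw [hTfun, hT]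
    refine tendsto_finset_sum _ fun i _ => tendsto_finset_sum _ fun j _ => ?_
    exact (hinvlim i j).const_mul _
  have hball : ∀ i, z i ∈ ball (0:ℂ) 1 := fun i => mem_ball_zero_iff.mpr (hz i)
  have hpt : ∀ i, Filter.Tendsto (fun r : ℝ => (r:ℂ)^2 * z i) l (nhds (z i)) := by
    intro i
    have := hr2.mul_const (z i)
    rwa [one_mul] at this
  have hPlim : Filter.Tendsto Pfun l (nhds (∑ i, c i * (b (z i) * hker z d2 (z i)))) := by
    rw [hPfun]
    refine tendsto_finset_sum _ fun i _ => ?_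
    refine Filter.Tendsto.const_mul _ (Filter.Tendsto.mul ?_ ?_)
    · exact ((hb_holo.continuousOn.continuousAt
        (isOpen_ball.mem_nhds (hball i))).tendsto).comp (hpt i)
    · exact (((hker_diff hz d2).continuousOn.continuousAt
        (isOpen_ball.mem_nhds (hball i))).tendsto).comp (hpt i)
  have hPT : (∑ i, c i * (b (z i) * hker z d2 (z i))) = T := by
    rw [hT]
    refine Finset.sum_congr rfl fun i _ => ?_
    rw [hker, Finset.mul_sum, Finset.mul_sum]
    refine Finset.sum_congr rfl fun j _ => ?_
    simp only [hd2]
    ring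
  rw [hPT] at hPlim
  have hev : ∀ᶠ r in l, r ∈ Set.Ioo (0:ℝ) 1 :=
    Ioo_mem_nhdsLT (by norm_num : (0:ℝ) < 1)
  have hSim : S.im = 0 := by
    refine tendsto_nhds_unique ((Complex.continuous_im.tendsto S).comp hSlim) ?_
    refine Filter.Tendsto.congr' ?_ tendsto_const_nhds
    filter_upwards [hev] with r hr
    exact ((hmain r hr).1).symm
  have hTim : T.im = 0 := by
    refine tendsto_nhds_unique ((Complex.continuous_im.tendsto T).comp hTlim) ?_
    refine Filter.Tendsto.congr' ?_ tendsto_const_nhds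
    filter_upwards [hev] with r hr
    exact ((hmain r hr).2.2.1).symm
  have hTre : 0 ≤ T.re :=
    ge_of_tendsto ((Complex.continuous_re.tendsto T).comp hTlim)
      (by filter_upwards [hev] with r hr; exact (hmain r hr).2.2.2.1)
  have hkey : 2 * T.re ≤ T.re + S.re := by
    have hlim : Filter.Tendsto (fun r => (Tfun r).re + (Sfun r).re - 2 * (Pfun r).re) l
        (nhds (T.re + S.re - 2 * T.re)) := by
      refine Filter.Tendsto.sub (Filter.Tendsto.add ?_ ?_) (Filter.Tendsto.const_mul _ ?_)
      · exact (Complex.continuous_re.tendsto T).comp hTlim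
      · exact (Complex.continuous_re.tendsto S).comp hSlim
      · exact (Complex.continuous_re.tendsto T).comp hPlim
    have h0 : 0 ≤ T.re + S.re - 2 * T.re :=
      ge_of_tendsto hlim (by filter_upwards [hev] with r hr; linarith [(hmain r hr).2.2.2.2])
    linarith
  -- conclude
  have hfinal : ∑ i, ∑ j, c i * conj (c j) *
      ((1 - b (z i) * conj (b (z j))) / (1 - z i * conj (z j))) = S - T := by
    rw [hS, hT, ← Finset.sum_sub_distrib]
    refine Finset.sum_congr rfl fun i _ => ?_
    rw [← Finset.sum_sub_distrib]
    refine Finset.sum_congr rfl fun j _ => ?_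
    have hD := one_sub_ne (hzz i j)
    rw [div_eq_mul_inv]
    simp only [hd2, map_mul]
    ring
  rw [hfinal, Complex.le_def]
  constructor
  · simp only [Complex.zero_re, Complex.sub_re]
    linarith
  · simp [Complex.sub_im, hSim, hTim]

open scoped MatrixOrder in
lemma psd_eq_conjTranspose_mul_self {n : ℕ} {M : Matrix (Fin n) (Fin n) ℂ} (h : M.PosSemidef) :
    ∃ B : Matrix (Fin n) (Fin n) ℂ, M = B.conjTranspose * B := by
  have h0 : 0 ≤ M := Matrix.nonneg_iff_posSemidef.mpr h
  refine ⟨CFC.sqrt M, ?_⟩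
  have := (CFC.sqrt_nonneg M).isSelfAdjoint
  rw [← Matrix.star_eq_conjTranspose, this.star_eq, CFC.sqrt_mul_sqrt_self M h0]

lemma schur_step {n : ℕ} (A N : Fin n → Fin n → ℂ)
    (hAh : ∀ i j, conj (A i j) = A j i)
    (hA : ∀ c : Fin n → ℂ, 0 ≤ ∑ i, ∑ j, c i * conj (c j) * A i j)
    (hN : ∀ c : Fin n → ℂ, 0 ≤ ∑ i, ∑ j, c i * conj (c j) * N i j)
    (c : Fin n → ℂ) :
    0 ≤ ∑ i, ∑ j, c i * conj (c j) * (A i j * N i j) := by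
  classical
  set M : Matrix (Fin n) (Fin n) ℂ := Matrix.of A with hM
  have hpsd : M.PosSemidef := by
    refine Matrix.posSemidef_iff_dotProduct_mulVec.mpr ⟨?_, ?_⟩
    · ext i j
      exact hAh j i
    · intro v
      have := hA (fun i => conj (v i))
      simp only [Complex.conj_conj] at this
      calc (0:ℂ) ≤ ∑ i, ∑ j, conj (v i) * v j * A i j := this
        _ = dotProduct (star v) (M.mulVec v) := by
            rw [dotProduct]
            refine Finset.sum_congr rfl fun i _ => ?_
            rw [Matrix.mulVec, dotProduct, Finset.mul_sum]
            refine Finset.sum_congr rfl fun j _ => ?_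
            simp only [hM, Matrix.of_apply, Pi.star_apply, RCLike.star_def]
            ring
  obtain ⟨B, hB⟩ := psd_eq_conjTranspose_mul_self hpsd
  have hAB : ∀ i j, A i j = ∑ k, conj (B k i) * B k j := by
    intro i j
    have : M i j = (B.conjTranspose * B) i j := by rw [hB]
    simpa [hM, Matrix.mul_apply, Matrix.conjTranspose_apply, RCLike.star_def] using this
  have h1 : ∀ i j, c i * conj (c j) * (A i j * N i j)
      = ∑ k, (c i * conj (B k i)) * conj (c j * conj (B k j)) * N i j := by
    intro i j
    rw [hAB i j, Finset.sum_mul, Finset.mul_sum]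
    refine Finset.sum_congr rfl fun k _ => ?_
    simp only [map_mul, Complex.conj_conj]
    ring
  have hrw : ∑ i, ∑ j, c i * conj (c j) * (A i j * N i j)
      = ∑ k, ∑ i, ∑ j, (c i * conj (B k i)) * conj (c j * conj (B k j)) * N i j :=
    calc ∑ i, ∑ j, c i * conj (c j) * (A i j * N i j)
        = ∑ i, ∑ j, ∑ k, (c i * conj (B k i)) * conj (c j * conj (B k j)) * N i j :=
          Finset.sum_congr rfl fun i _ => Finset.sum_congr rfl fun j _ => h1 i j
      _ = ∑ i, ∑ k, ∑ j, (c i * conj (B k i)) * conj (c j * conj (B k j)) * N i j :=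
          Finset.sum_congr rfl fun i _ => Finset.sum_comm
      _ = ∑ k, ∑ i, ∑ j, (c i * conj (B k i)) * conj (c j * conj (B k j)) * N i j :=
          Finset.sum_comm
  rw [hrw]
  exact Finset.sum_nonneg fun k _ => hN (fun i => c i * conj (B k i))

lemma pow_psd {n : ℕ} (A : Fin n → Fin n → ℂ)
    (hAh : ∀ i j, conj (A i j) = A j i)
    (hA : ∀ c : Fin n → ℂ, 0 ≤ ∑ i, ∑ j, c i * conj (c j) * A i j)
    (α : ℕ) (hα : 1 ≤ α) :
    ∀ c : Fin n → ℂ, 0 ≤ ∑ i, ∑ j, c i * conj (c j) * (A i j) ^ α := by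
  induction α with
  | zero => omega
  | succ m ih =>
    intro c
    rcases Nat.eq_or_lt_of_le hα with h1 | h2
    · simp only [← h1, pow_one]
      exact hA c
    · have hm : 1 ≤ m := by omega
      have := schur_step A (fun i j => (A i j)^m) hAh hA (ih hm) c
      have hpow : ∀ i j : Fin n, A i j * (A i j)^m = (A i j)^(m+1) := fun i j =>
        (pow_succ' (A i j) m).symm
      simpa only [hpow] using this

end DBRAux

/-- For an integer `α ≥ 1`, the kernel `k^{b,α}(z,w) = ((1 − b(z)·conj(b(w)))/(1 − z·conj w))^α`
is positive semidefinite on the unit disk. -/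
theorem deBrangesRovnyak_power_kernel_psd
    (b : ℂ → ℂ) (α : ℕ) (hα : 1 ≤ α)
    (hb_holo : DifferentiableOn ℂ b (ball (0 : ℂ) 1))
    (hb_maps : ∀ z ∈ ball (0 : ℂ) 1, b z ∈ ball (0 : ℂ) 1) :
    IsPSDKernelOn
      (fun z w => ((1 - b z * conj (b w)) / (1 - z * conj w)) ^ α)
      (ball (0 : ℂ) 1) := by
  intro n x hx c
  have hz : ∀ i, ‖x i‖ < 1 := fun i => mem_ball_zero_iff.mp (hx i)
  set A : Fin n → Fin n → ℂ :=
    fun i j => (1 - b (x i) * conj (b (x j))) / (1 - x i * conj (x j)) with hA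
  have hAh : ∀ i j, conj (A i j) = A j i := by
    intro i j
    simp only [hA, map_div₀, map_sub, map_one, map_mul, Complex.conj_conj]
    congr 1 <;> ring
  have hbase : ∀ c : Fin n → ℂ, 0 ≤ ∑ i, ∑ j, c i * conj (c j) * A i j := fun c =>
    base_psd b hb_holo hb_maps hz c
  exact pow_psd A hAh hbase α hα c
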